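/- Let f(x) be a q^s-polynomial over F_{q^n} with gcd(s,n)=1, of q^s-degree n-2, with kernel of F_q-dimension n-2. If the coefficient of x^{q^s} in f is zero, then n is even and f(x) = α·Tr_{q^n/q^2}(βx) for some α, β ∈ F_{q^n}*. -/

import Mathlib

set_option maxHeartbeats 1000000
set_option synthInstance.maxHeartbeats 200000

-- closure of a predicate on ℕ under + and truncated - gives closure under gcd
private lemma multClosed {D : ℕ → Prop} (hadd : ∀ m k, D m → D k → D (m + k)) :
    ∀ k m, D m → D ((k + 1) * m) := by
  intro k
  induction k with
  | zero => intro m hm; simpa using hm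
  | succ k ih =>
    intro m hm
    have := hadd _ _ (ih m hm) hm
    have h : (k + 1) * m + m = (k + 1 + 1) * m := by ring
    rwa [h] at this

private lemma gcdClosed {D : ℕ → Prop}
    (hadd : ∀ m k, D m → D k → D (m + k))
    (hsub : ∀ m k, k ≤ m → D m → D k → D (m - k)) :
    ∀ a b, D a → D b → D (Nat.gcd a b) := by
  intro a
  induction a using Nat.strong_induction_on with
  | _ a ih =>
    intro b ha hb
    rcases Nat.eq_zero_or_pos a with rfl | hpos
    · simpa using hb
    · rw [Nat.gcd_rec]
      refine ih (b % a) (Nat.mod_lt b hpos) a ?_ ha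
      have hmd := Nat.mod_add_div b a
      rcases Nat.eq_zero_or_pos (b / a) with h0 | hdiv
      · rw [h0, Nat.mul_zero] at hmd
        have : b % a = b := by omega
        rwa [this]
      · obtain ⟨k, hk⟩ : ∃ k, b / a = k + 1 := ⟨b / a - 1, by omega⟩
        have h1 : D (a * (b / a)) := by
          rw [hk, Nat.mul_comm]
          exact multClosed hadd k a ha
        have h2 : a * (b / a) ≤ b := by omega
        have h3 : b % a = b - a * (b / a) := by omega
        rw [h3]
        exact hsub _ _ h2 hb h1

private lemma sum_range_even_odd {M : Type*} [AddCommMonoid M] (g : ℕ → M) (m : ℕ) :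
    ∑ i ∈ Finset.range (2 * m), g i
      = ∑ k ∈ Finset.range m, g (2 * k) + ∑ k ∈ Finset.range m, g (2 * k + 1) := by
  induction m with
  | zero => simp
  | succ m ih =>
    have h : 2 * (m + 1) = (2 * m) + 1 + 1 := by ring
    rw [h, Finset.sum_range_succ, Finset.sum_range_succ, ih,
      Finset.sum_range_succ (fun k => g (2 * k)), Finset.sum_range_succ (fun k => g (2 * k + 1))]
    abel

private def Ffix (L : Type*) [Field L] (q : ℕ) (hq : q ≠ 0)
    (hadd : ∀ x y : L, (x + y) ^ q = x ^ q + y ^ q) (hneg : (-1 : L) ^ q = -1) :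
    Subfield L where
  carrier := {x : L | x ^ q = x}
  mul_mem' := fun {x y} hx hy => by
    simp only [Set.mem_setOf_eq] at *
    rw [mul_pow, hx, hy]
  one_mem' := one_pow q
  add_mem' := fun {x y} hx hy => by
    simp only [Set.mem_setOf_eq] at *
    rw [hadd x y, hx, hy]
  zero_mem' := zero_pow hq
  neg_mem' := fun {x} hx => by
    simp only [Set.mem_setOf_eq] at *
    calc (-x) ^ q = ((-1) * x) ^ q := by rw [neg_one_mul]
    _ = (-1 : L) ^ q * x ^ q := mul_pow _ _ _
    _ = -x := by rw [hneg, hx, neg_one_mul]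
  inv_mem' := fun x hx => by
    simp only [Set.mem_setOf_eq] at *
    rw [inv_pow, hx]

private lemma mem_Ffix {L : Type*} [Field L] {q : ℕ} {hq : q ≠ 0}
    {hadd : ∀ x y : L, (x + y) ^ q = x ^ q + y ^ q} {hneg : (-1 : L) ^ q = -1} {x : L} :
    x ∈ Ffix L q hq hadd hneg ↔ x ^ q = x := Iff.rfl

/-- Let `f` be a `q^s`-polynomial over `F_{q^n}` (`gcd(s,n) = 1`) of
`q^s`-degree `n-2` with kernel of `F_q`-dimension `n-2`. If the coefficient of `x^{q^s}`
is zero, then `n` is even and `f(x) = α · Tr_{q^n/q^2}(βx)` for some `α, β ∈ F_{q^n}^*`. -/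
theorem stmt11 (q n s : ℕ) (hq : IsPrimePow q) (hn : 3 ≤ n) (hs : Nat.gcd s n = 1)
    (L : Type*) [Field L] [Fintype L] (hL : Fintype.card L = q ^ n)
    (a : ℕ → L) (hdeg : a (n - 2) ≠ 0) (h1 : a 1 = 0)
    (hker : Set.ncard {x : L | ∑ i ∈ Finset.range (n - 1), a i * x ^ q ^ (s * i) = 0}
      = q ^ (n - 2)) :
    Even n ∧ ∃ α β : L, α ≠ 0 ∧ β ≠ 0 ∧
      ∀ x : L, ∑ i ∈ Finset.range (n - 1), a i * x ^ q ^ (s * i)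
        = α * ∑ i ∈ Finset.range (n / 2), (β * x) ^ q ^ (2 * i) := by
  classical
  obtain ⟨p, e, hp', he, hpe⟩ := hq
  have hp : Nat.Prime p := Nat.prime_iff.mpr hp'
  have hq2 : 2 ≤ q := by
    calc 2 ≤ p := hp.two_le
    _ ≤ p ^ e := Nat.le_self_pow (by omega) p
    _ = q := hpe
  have hn0 : 0 < n := by omega
  -- characteristic
  have hcard : Fintype.card L = p ^ (e * n) := by rw [hL, ← hpe, ← pow_mul]
  haveI : CharP L (ringChar L) := ringChar.charP L
  obtain ⟨m, hrp, hrc⟩ := FiniteField.card L (ringChar L)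
  have hpr : ringChar L = p := by
    have h1' : (ringChar L) ∣ p ^ (e * n) := by
      rw [← hcard, hrc]; exact dvd_pow_self _ (by exact_mod_cast m.ne_zero)
    exact (Nat.prime_dvd_prime_iff_eq hrp hp).mp (hrp.dvd_of_dvd_pow h1')
  haveI hchar : CharP L p := hpr ▸ ringChar.charP L
  haveI : Fact p.Prime := ⟨hp⟩
  haveI : ExpChar L p := ExpChar.prime hp
  -- Frobenius tools
  have hq1 : ∀ (x y : L) (k : ℕ), (x + y) ^ q ^ k = x ^ q ^ k + y ^ q ^ k := by
    intro x y k
    have h : q ^ k = p ^ (e * k) := by rw [← hpe, ← pow_mul]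
    rw [h]; exact add_pow_char_pow x y p (e * k)
  have hq1' : ∀ x y : L, (x + y) ^ q = x ^ q + y ^ q := by
    intro x y; have := hq1 x y 1; rwa [pow_one] at this
  have hinjk : ∀ k : ℕ, Function.Injective fun x : L => x ^ q ^ k := by
    intro k
    have hh : ∀ x : L, x ^ q ^ k = iterateFrobenius L p (e * k) x := by
      intro x; rw [iterateFrobenius_def, pow_mul, hpe]
    intro x y hxy
    simp only at hxy
    rw [hh, hh] at hxy
    exact (iterateFrobenius L p (e * k)).injective hxy
  have hxqn : ∀ x : L, x ^ q ^ n = x := fun x => by rw [← hL]; exact FiniteField.pow_card x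
  have hiter : ∀ (x : L) (j : ℕ), x ^ (q ^ n) ^ j = x := by
    intro x j
    induction j with
    | zero => simp
    | succ j ih => rw [pow_succ, pow_mul, ih]; exact hxqn x
  have hred : ∀ (x : L) (m : ℕ), x ^ q ^ m = x ^ q ^ (m % n) := by
    intro x m
    conv_lhs => rw [show m = m % n + n * (m / n) from (Nat.mod_add_div m n).symm]
    rw [pow_add, pow_mul q n (m / n), pow_mul x]
    exact hiter _ _
  have hFpow : ∀ (c : L), c ^ q = c → ∀ k, c ^ q ^ k = c := by
    intro c hc k
    induction k with
    | zero => simp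
    | succ k ih => rw [pow_succ, pow_mul, ih, hc]
  -- the subfield F of q elements
  have hqne : q ≠ 0 := by omega
  have hnegone : (-1 : L) ^ q = -1 := by
    rw [← hpe]; exact neg_one_pow_char_pow L p e
  set F : Subfield L := Ffix L q hqne hq1' hnegone with hFdef
  have hmemF : ∀ x : L, x ∈ F ↔ x ^ q = x := fun _ => mem_Ffix
  -- cardinality of F
  obtain ⟨g, hg⟩ := IsCyclic.exists_generator (α := Lˣ)
  have hog : orderOf g = q ^ n - 1 := by
    rw [orderOf_eq_card_of_forall_mem_zpowers hg, Nat.card_eq_fintype_card,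
      Fintype.card_units, hL]
  have hdvd : q - 1 ∣ q ^ n - 1 := by simpa using Nat.sub_dvd_pow_sub_pow q 1 n
  have hN1 : 1 < q ^ n := Nat.one_lt_pow (by omega) hq2
  have hζo : orderOf (g ^ ((q ^ n - 1) / (q - 1))) = q - 1 := by
    rw [orderOf_pow, hog, Nat.gcd_eq_right (Nat.div_dvd_of_dvd hdvd),
      Nat.div_div_self hdvd (by omega)]
  have hζ : IsPrimitiveRoot ((g ^ ((q ^ n - 1) / (q - 1)) : Lˣ) : L) (q - 1) := by
    have h := IsPrimitiveRoot.orderOf (g ^ ((q ^ n - 1) / (q - 1)))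
    rw [hζo] at h
    exact IsPrimitiveRoot.coe_units_iff.mpr h
  have hcardroots : (Polynomial.nthRootsFinset (q - 1) (1 : L)).card = q - 1 :=
    hζ.card_nthRootsFinset
  have hd0 : 0 < q - 1 := by omega
  have hFset : (F : Set L) = insert (0 : L) ↑(Polynomial.nthRootsFinset (q - 1) (1 : L)) := by
    ext x
    simp only [SetLike.mem_coe, hmemF, Set.mem_insert_iff, Finset.mem_coe,
      Polynomial.mem_nthRootsFinset hd0]
    constructor
    · intro hx
      rcases eq_or_ne x 0 with rfl | hx0
      · exact Or.inl rfl
      · refine Or.inr ?_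
        have hq' : q - 1 + 1 = q := by omega
        have hxx : x ^ (q - 1) * x = x := by rw [← pow_succ, hq']; exact hx
        have := mul_right_cancel₀ hx0 (by rw [hxx, one_mul] : x ^ (q - 1) * x = 1 * x)
        exact this
    · rintro (rfl | hx1)
      · exact zero_pow hqne
      · have hq' : q = q - 1 + 1 := by omega
        rw [hq', pow_succ, hx1, one_mul]
  have h0nr : (0 : L) ∉ (Polynomial.nthRootsFinset (q - 1) (1 : L) : Set L) := by
    simp only [Finset.mem_coe, Polynomial.mem_nthRootsFinset hd0]
    rw [zero_pow (by omega)]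
    exact fun h => one_ne_zero h.symm
  have hcardF : Nat.card F = q := by
    have h1' : Nat.card F = ((F : Set L)).ncard := Nat.card_coe_set_eq _
    rw [h1', hFset, Set.ncard_insert_of_notMem h0nr ((Polynomial.nthRootsFinset (q-1) (1 : L)).finite_toSet),
      Set.ncard_coe_finset, hcardroots]
    omega
  haveI : Fintype F := Fintype.ofFinite F
  have hcardF' : Fintype.card F = q := by rw [← Nat.card_eq_fintype_card, hcardF]
  haveI : Module.Finite F L := Module.finite_iff_finite.mpr inferInstance
  have hfinrankL : Module.finrank F L = n := by
    have hc := Module.card_eq_pow_finrank (K := F) (V := L)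
    rw [hcardF', hL] at hc
    exact (Nat.pow_right_injective hq2 hc).symm
  -- the linear map f
  have hsmul : ∀ (t : F) (y : L), t • y = (t : L) * y := fun _ _ => rfl
  let fL : L →ₗ[F] L :=
  { toFun := fun x => ∑ i ∈ Finset.range (n - 1), a i * x ^ q ^ (s * i)
    map_add' := by
      intro x y
      rw [← Finset.sum_add_distrib]
      refine Finset.sum_congr rfl fun i _ => ?_
      rw [hq1, mul_add]
    map_smul' := by
      intro c x
      simp only [RingHom.id_apply]
      rw [hsmul, hsmul, Finset.mul_sum]
      refine Finset.sum_congr rfl fun i _ => ?_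
      have hc : (c : L) ^ q = (c : L) := (hmemF _).mp c.2
      rw [mul_pow, hFpow _ hc (s * i)]
      ring }
  have hfLapp : ∀ x : L, fL x = ∑ i ∈ Finset.range (n - 1), a i * x ^ q ^ (s * i) :=
    fun _ => rfl
  -- kernel
  have hsetEq : (LinearMap.ker fL : Set L)
      = {x : L | ∑ i ∈ Finset.range (n - 1), a i * x ^ q ^ (s * i) = 0} := by
    ext x
    simp only [SetLike.mem_coe, LinearMap.mem_ker, Set.mem_setOf_eq]
    rw [hfLapp]
  have hkercard : Nat.card (LinearMap.ker fL) = q ^ (n - 2) := by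
    have h1' : Nat.card (LinearMap.ker fL) = ((LinearMap.ker fL : Set L)).ncard :=
      Nat.card_coe_set_eq _
    rw [h1', hsetEq]
    exact hker
  haveI : Fintype (LinearMap.ker fL) := Fintype.ofFinite _
  have hfker : Module.finrank F (LinearMap.ker fL) = n - 2 := by
    have hc := Module.card_eq_pow_finrank (K := F) (V := LinearMap.ker fL)
    rw [hcardF'] at hc
    have h2' : (q : ℕ) ^ (n - 2) = q ^ Module.finrank F (LinearMap.ker fL) := by
      rw [← hc, ← Nat.card_eq_fintype_card, hkercard]
    exact (Nat.pow_right_injective hq2 h2').symm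
  have hfrange : Module.finrank F (LinearMap.range fL) = 2 := by
    have h := LinearMap.finrank_range_add_finrank_ker fL
    rw [hfker, hfinrankL] at h
    omega
  let B : Module.Basis (Fin 2) F (LinearMap.range fL) :=
    Module.finBasisOfFinrankEq F _ hfrange
  set u : L := ((B 0 : LinearMap.range fL) : L) with hu_def
  set v : L := ((B 1 : LinearMap.range fL) : L) with hv_def
  have hu0 : u ≠ 0 := fun h => B.ne_zero 0 (Subtype.ext h)
  have hv0 : v ≠ 0 := fun h => B.ne_zero 1 (Subtype.ext h)
  -- trace function
  let TrL : L → L := fun z => ∑ i ∈ Finset.range n, z ^ q ^ i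
  have hTrapp : ∀ z : L, TrL z = ∑ i ∈ Finset.range n, z ^ q ^ i := fun _ => rfl
  have hTrF : ∀ z : L, (TrL z) ^ q = TrL z := by
    intro z
    have h1' : (TrL z) ^ q = ∑ i ∈ Finset.range n, (z ^ q ^ i) ^ q := by
      rw [hTrapp, show (q : ℕ) = p ^ e from hpe.symm]
      exact sum_pow_char_pow p e _ _
    rw [h1']
    have h2' : ∀ i : ℕ, (z ^ q ^ i) ^ q = z ^ q ^ (i + 1) := by
      intro i; rw [← pow_mul, ← pow_succ]
    calc ∑ i ∈ Finset.range n, (z ^ q ^ i) ^ q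
        = ∑ i ∈ Finset.range n, z ^ q ^ (i + 1) :=
          Finset.sum_congr rfl fun i _ => h2' i
    _ = TrL z := by
        have ha := Finset.sum_range_succ' (fun i => z ^ q ^ i) n
        have hb := Finset.sum_range_succ (fun i => z ^ q ^ i) n
        simp only [pow_zero, pow_one] at ha
        rw [hxqn z] at hb
        rw [hTrapp]
        exact add_right_cancel (ha.symm.trans hb)
  let Tr' : L →ₗ[F] F :=
  { toFun := fun z => ⟨TrL z, hTrF z⟩
    map_add' := by
      intro x y
      apply Subtype.ext
      show TrL (x + y) = TrL x + TrL y
      rw [hTrapp, hTrapp, hTrapp, ← Finset.sum_add_distrib]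
      exact Finset.sum_congr rfl fun i _ => hq1 x y i
    map_smul' := by
      intro c x
      apply Subtype.ext
      show TrL ((c : L) * x) = (c : L) * TrL x
      rw [hTrapp, hTrapp, Finset.mul_sum]
      refine Finset.sum_congr rfl fun i _ => ?_
      rw [mul_pow, hFpow _ ((hmemF _).mp c.2) i] }
  have hTr'app : ∀ z : L, ((Tr' z : F) : L) = TrL z := fun _ => rfl
  -- the duality map
  let Tmap : L →ₗ[F] Module.Dual F L :=
  { toFun := fun b0 => Tr' ∘ₗ LinearMap.mulLeft F b0
    map_add' := by
      intro b1 b2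
      ext x
      simp only [LinearMap.comp_apply, LinearMap.mulLeft_apply, LinearMap.add_apply]
      rw [add_mul, map_add]
    map_smul' := by
      intro c b0
      ext x
      simp only [LinearMap.comp_apply, LinearMap.mulLeft_apply, RingHom.id_apply,
        LinearMap.smul_apply]
      rw [smul_mul_assoc, map_smul] }
  have hTmapp : ∀ (b0 x : L), (Tmap b0) x = Tr' (b0 * x) := fun _ _ => rfl
  -- TrL is not identically zero
  have hTr_ne : ∃ y : L, TrL y ≠ 0 := by
    by_contra hcon
    push_neg at hcon
    have hT0 : (∑ i ∈ Finset.range n, Polynomial.monomial (q ^ i) (1 : L)) = 0 := by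
      apply Polynomial.eq_zero_of_natDegree_lt_card_of_eval_eq_zero' _ Finset.univ
      · intro x _
        rw [Polynomial.eval_finset_sum]
        have hh : ∀ i ∈ Finset.range n,
            Polynomial.eval x (Polynomial.monomial (q ^ i) (1 : L)) = x ^ q ^ i := by
          intro i _; rw [Polynomial.eval_monomial, one_mul]
        rw [Finset.sum_congr rfl hh, ← hTrapp, hcon]
      · rw [Finset.card_univ, hL]
        refine lt_of_le_of_lt (Polynomial.natDegree_sum_le_of_forall_le _ _ fun i hi => ?_)
          (Nat.pow_lt_pow_right (by omega) (by omega) : q ^ (n-1) < q ^ n)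
        refine le_trans (Polynomial.natDegree_monomial_le _) (Nat.pow_le_pow_right (by omega) ?_)
        have := Finset.mem_range.mp hi
        omega
    have hcoe : (∑ i ∈ Finset.range n, Polynomial.monomial (q ^ i) (1 : L)).coeff (q ^ (n-1))
        = 1 := by
      rw [Polynomial.finset_sum_coeff]
      rw [Finset.sum_eq_single (n-1)]
      · rw [Polynomial.coeff_monomial, if_pos rfl]
      · intro i hi hne
        rw [Polynomial.coeff_monomial, if_neg]
        intro hEq
        exact hne (Nat.pow_right_injective hq2 hEq)
      · intro hnot
        exact absurd (Finset.mem_range.mpr (by omega)) hnot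
    rw [hT0] at hcoe
    simp at hcoe
  -- injectivity and surjectivity of Tmap
  have hTinj : Function.Injective Tmap := by
    apply (injective_iff_map_eq_zero Tmap).mpr
    intro b0 hb0
    by_contra hb0'
    obtain ⟨y, hy⟩ := hTr_ne
    have h2' : Tr' (b0 * (b0⁻¹ * y)) = 0 := by
      have := LinearMap.congr_fun hb0 (b0⁻¹ * y)
      rwa [hTmapp] at this
    rw [← mul_assoc, mul_inv_cancel₀ hb0', one_mul] at h2'
    exact hy (by rw [← hTr'app, h2']; rfl)
  have hTsurj : Function.Surjective Tmap :=
    (LinearMap.injective_iff_surjective_of_finrank_eq_finrank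
      (Subspace.dual_finrank_eq).symm).mp hTinj
  -- representation of fL
  obtain ⟨b, hb⟩ := hTsurj ((B.coord 0) ∘ₗ fL.rangeRestrict)
  obtain ⟨c, hc⟩ := hTsurj ((B.coord 1) ∘ₗ fL.rangeRestrict)
  have hrep : ∀ x : L,
      (∑ i ∈ Finset.range (n - 1), a i * x ^ q ^ (s * i))
        = TrL (b * x) * u + TrL (c * x) * v := by
    intro x
    have hsum := B.sum_repr (fL.rangeRestrict x)
    rw [Fin.sum_univ_two] at hsum
    have hcoe := congrArg (Subtype.val) hsum
    simp only [Submodule.coe_add, SetLike.val_smul] at hcoe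
    have hw : ((fL.rangeRestrict x : LinearMap.range fL) : L) = fL x := rfl
    rw [hw] at hcoe
    have e0 : ((B.repr (fL.rangeRestrict x) 0 : F) : L) = TrL (b * x) := by
      have h1' : ((B.coord 0) ∘ₗ fL.rangeRestrict) x = B.repr (fL.rangeRestrict x) 0 := by
        simp [Module.Basis.coord_apply]
      have h2' : ((B.coord 0) ∘ₗ fL.rangeRestrict) x = Tr' (b * x) := by
        rw [← hb]; rfl
      rw [← h1', h2']; rfl
    have e1 : ((B.repr (fL.rangeRestrict x) 1 : F) : L) = TrL (c * x) := by
      have h1' : ((B.coord 1) ∘ₗ fL.rangeRestrict) x = B.repr (fL.rangeRestrict x) 1 := by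
        simp [Module.Basis.coord_apply]
      have h2' : ((B.coord 1) ∘ₗ fL.rangeRestrict) x = Tr' (c * x) := by
        rw [← hc]; rfl
      rw [← h1', h2']; rfl
    rw [hsmul, hsmul, e0, e1] at hcoe
    rw [← hfLapp, ← hcoe]
  -- coefficient identities
  have hmodinj : ∀ i j : ℕ, i < n → j < n → (s*i) % n = (s*j) % n → i = j := by
    intro i j hi hj hmod
    have h1' : s * i ≡ s * j [MOD n] := hmod
    have h2' := Nat.ModEq.cancel_left_of_coprime (by rwa [Nat.gcd_comm] at hs) h1'
    have h3' : i % n = j % n := h2'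
    rwa [Nat.mod_eq_of_lt hi, Nat.mod_eq_of_lt hj] at h3'
  have hP : (∑ i ∈ Finset.range (n-1), Polynomial.monomial (q ^ ((s*i) % n)) (a i))
      = ∑ i ∈ Finset.range n, Polynomial.monomial (q ^ i) (u * b ^ q ^ i + v * c ^ q ^ i) := by
    have hsub : (∑ i ∈ Finset.range (n-1), Polynomial.monomial (q ^ ((s*i) % n)) (a i))
        - (∑ i ∈ Finset.range n,
            Polynomial.monomial (q ^ i) (u * b ^ q ^ i + v * c ^ q ^ i)) = 0 := by
      apply Polynomial.eq_zero_of_natDegree_lt_card_of_eval_eq_zero' _ Finset.univ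
      · intro x _
        rw [Polynomial.eval_sub]
        have h1' : Polynomial.eval x (∑ i ∈ Finset.range (n-1),
            Polynomial.monomial (q ^ ((s*i) % n)) (a i))
            = ∑ i ∈ Finset.range (n-1), a i * x ^ q ^ (s*i) := by
          rw [Polynomial.eval_finset_sum]
          refine Finset.sum_congr rfl fun i _ => ?_
          rw [Polynomial.eval_monomial, ← hred]
        have h2' : Polynomial.eval x (∑ i ∈ Finset.range n,
            Polynomial.monomial (q ^ i) (u * b ^ q ^ i + v * c ^ q ^ i))
            = TrL (b*x) * u + TrL (c*x) * v := by
          rw [Polynomial.eval_finset_sum]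
          have hh : ∀ i ∈ Finset.range n,
              Polynomial.eval x (Polynomial.monomial (q ^ i) (u * b ^ q ^ i + v * c ^ q ^ i))
              = (b*x) ^ q ^ i * u + (c*x) ^ q ^ i * v := by
            intro i _
            rw [Polynomial.eval_monomial, mul_pow, mul_pow]
            ring
          rw [Finset.sum_congr rfl hh, Finset.sum_add_distrib, ← Finset.sum_mul,
            ← Finset.sum_mul, ← hTrapp, ← hTrapp]
        rw [h1', h2', hrep x, sub_self]
      · rw [Finset.card_univ, hL]
        have hd1 : (∑ i ∈ Finset.range (n-1),
            Polynomial.monomial (q ^ ((s*i) % n)) (a i)).natDegree ≤ q ^ (n-1) := by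
          apply Polynomial.natDegree_sum_le_of_forall_le
          intro i _
          refine le_trans (Polynomial.natDegree_monomial_le _)
            (Nat.pow_le_pow_right (by omega) ?_)
          have := Nat.mod_lt (s*i) hn0
          omega
        have hd2 : (∑ i ∈ Finset.range n,
            Polynomial.monomial (q ^ i) (u * b ^ q ^ i + v * c ^ q ^ i)).natDegree
            ≤ q ^ (n-1) := by
          apply Polynomial.natDegree_sum_le_of_forall_le
          intro i hi
          refine le_trans (Polynomial.natDegree_monomial_le _)
            (Nat.pow_le_pow_right (by omega) ?_)
          have := Finset.mem_range.mp hi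
          omega
        exact lt_of_le_of_lt (le_trans (Polynomial.natDegree_sub_le _ _) (max_le hd1 hd2))
          (Nat.pow_lt_pow_right (by omega) (by omega))
    exact sub_eq_zero.mp hsub
  have hE : ∀ i0 : ℕ, i0 < n → (if i0 < n - 1 then a i0 else 0)
      = u * b ^ q ^ ((s*i0) % n) + v * c ^ q ^ ((s*i0) % n) := by
    intro i0 hi0
    have hco := congrArg (fun P : Polynomial L => P.coeff (q ^ ((s*i0) % n))) hP
    simp only [Polynomial.finset_sum_coeff] at hco
    have hL1 : ∑ i ∈ Finset.range (n-1),
        (Polynomial.monomial (q ^ ((s*i) % n)) (a i)).coeff (q ^ ((s*i0) % n))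
        = (if i0 < n - 1 then a i0 else 0) := by
      by_cases hcase : i0 < n - 1
      · rw [if_pos hcase, Finset.sum_eq_single i0]
        · rw [Polynomial.coeff_monomial, if_pos rfl]
        · intro i hi hne
          rw [Polynomial.coeff_monomial, if_neg]
          intro hEq
          exact hne (hmodinj i i0 (by have := Finset.mem_range.mp hi; omega) hi0
            (Nat.pow_right_injective hq2 hEq))
        · intro hnot
          exact absurd (Finset.mem_range.mpr hcase) hnot
      · rw [if_neg hcase]
        apply Finset.sum_eq_zero
        intro i hi
        rw [Polynomial.coeff_monomial, if_neg]
        intro hEq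
        have h5' := hmodinj i i0 (by have := Finset.mem_range.mp hi; omega) hi0
          (Nat.pow_right_injective hq2 hEq)
        have := Finset.mem_range.mp hi
        omega
    have hL2 : ∑ i ∈ Finset.range n,
        (Polynomial.monomial (q ^ i) (u * b ^ q ^ i + v * c ^ q ^ i)).coeff (q ^ ((s*i0) % n))
        = u * b ^ q ^ ((s*i0) % n) + v * c ^ q ^ ((s*i0) % n) := by
      have hjn : (s*i0) % n < n := Nat.mod_lt _ hn0
      rw [Finset.sum_eq_single ((s*i0) % n)]
      · rw [Polynomial.coeff_monomial, if_pos rfl]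
      · intro i hi hne
        rw [Polynomial.coeff_monomial, if_neg]
        intro hEq
        exact hne (Nat.pow_right_injective hq2 hEq)
      · intro hnot
        exact absurd (Finset.mem_range.mpr hjn) hnot
    rw [hL1, hL2] at hco
    exact hco
  have hE1 := hE 1 (by omega)
  rw [if_pos (by omega : (1:ℕ) < n - 1), h1] at hE1
  have hE2 := hE (n-1) (by omega)
  rw [if_neg (by omega : ¬(n-1 < n-1))] at hE2
  have hE3 := hE (n-2) (by omega)
  rw [if_pos (by omega : n-2 < n-1)] at hE3
  have hbne : b ≠ 0 := by
    intro hb0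
    rw [hb0, zero_pow (pow_ne_zero _ hqne), mul_zero, zero_add] at hE1
    have hcc : c = 0 := by
      rcases mul_eq_zero.mp hE1.symm with h' | h'
      · exact absurd h' hv0
      · exact (pow_eq_zero_iff (pow_ne_zero _ hqne)).mp h'
    simp only [hb0, hcc, zero_pow (pow_ne_zero _ hqne), mul_zero, add_zero] at hE3
    exact hdeg hE3
  have hcne : c ≠ 0 := by
    intro hc0
    rw [hc0, zero_pow (pow_ne_zero _ hqne), mul_zero, add_zero] at hE1
    have hbb : b = 0 := by
      rcases mul_eq_zero.mp hE1.symm with h' | h'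
      · exact absurd h' hu0
      · exact (pow_eq_zero_iff (pow_ne_zero _ hqne)).mp h'
    simp only [hc0, hbb, zero_pow (pow_ne_zero _ hqne), mul_zero, add_zero] at hE3
    exact hdeg hE3
  -- the indices j1 and j2
  have hj1n : (s*1) % n < n := Nat.mod_lt _ hn0
  have hj2n : (s*(n-1)) % n < n := Nat.mod_lt _ hn0
  have hj10 : (s*1) % n ≠ 0 := by
    intro h
    have h0 : (s*0) % n = 0 := by simp
    have := hmodinj 1 0 (by omega) (by omega) (by rw [h, h0])
    omega
  have hj20 : (s*(n-1)) % n ≠ 0 := by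
    intro h
    have h0 : (s*0) % n = 0 := by simp
    have := hmodinj (n-1) 0 (by omega) (by omega) (by rw [h, h0])
    omega
  have hj12 : (s*1) % n + (s*(n-1)) % n = n := by
    have hmod : ((s*1) % n + (s*(n-1)) % n) % n = 0 := by
      have hsn : s*1 + s*(n-1) = s * n := by
        rw [← Nat.mul_add]
        congr 1
        omega
      rw [← Nat.add_mod, hsn, Nat.mul_mod_left]
    have hdvd2 : n ∣ ((s*1) % n + (s*(n-1)) % n) := Nat.dvd_of_mod_eq_zero hmod
    have hle : n ≤ (s*1) % n + (s*(n-1)) % n := Nat.le_of_dvd (by omega) hdvd2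
    have hdvd3 : n ∣ ((s*1) % n + (s*(n-1)) % n - n) := Nat.dvd_sub hdvd2 dvd_rfl
    have hz := Nat.eq_zero_of_dvd_of_lt hdvd3
    rcases Nat.eq_zero_or_pos ((s*1) % n + (s*(n-1)) % n - n) with h' | h'
    · omega
    · exfalso
      have := hz (by omega)
      omega
  -- the element t
  set t : L := c * b⁻¹ with ht_def
  have htb : c = t * b := by
    rw [ht_def]
    field_simp
  have hkey : ∀ j : ℕ, (0 : L) = u * b ^ q ^ j + v * c ^ q ^ j → u = -(v * t ^ q ^ j) := by
    intro j hj
    have hbQ : b ^ q ^ j ≠ 0 := pow_ne_zero _ hbne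
    have h2' : (u + v * t ^ q ^ j) * b ^ q ^ j = 0 := by
      have hcq : c ^ q ^ j = t ^ q ^ j * b ^ q ^ j := by rw [htb, mul_pow]
      rw [hcq] at hj
      linear_combination -hj
    exact eq_neg_of_add_eq_zero_left ((mul_eq_zero.mp h2').resolve_right hbQ)
  have hu1 : u = -(v * t ^ q ^ ((s*1) % n)) := hkey _ hE1
  have hu2 : u = -(v * t ^ q ^ ((s*(n-1)) % n)) := hkey _ hE2
  have htt : t ^ q ^ ((s*1) % n) = t ^ q ^ ((s*(n-1)) % n) :=
    mul_left_cancel₀ hv0 (neg_injective (hu1.symm.trans hu2))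
  -- closure properties and gcd
  have hD2 : t ^ q ^ ((s*1) % n + (s*1) % n) = t := by
    rw [pow_add, pow_mul, htt, ← pow_mul, ← pow_add, Nat.add_comm, hj12]
    exact hxqn t
  have hDadd : ∀ m1 k1 : ℕ, t ^ q ^ m1 = t → t ^ q ^ k1 = t → t ^ q ^ (m1 + k1) = t := by
    intro m1 k1 hm hk
    rw [pow_add, pow_mul, hm, hk]
  have hDsub : ∀ m1 k1 : ℕ, k1 ≤ m1 → t ^ q ^ m1 = t → t ^ q ^ k1 = t
      → t ^ q ^ (m1 - k1) = t := by
    intro m1 k1 hkm hm hk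
    apply hinjk k1
    show (t ^ q ^ (m1 - k1)) ^ q ^ k1 = t ^ q ^ k1
    rw [← pow_mul, ← pow_add, Nat.sub_add_cancel hkm, hm, hk]
  have hgcdD : t ^ q ^ (Nat.gcd ((s*1) % n + (s*1) % n) n) = t :=
    gcdClosed hDadd hDsub _ _ hD2 (hxqn t)
  have hgcd2 : Nat.gcd ((s*1) % n + (s*1) % n) n = Nat.gcd 2 n := by
    have h1' : (s*1) % n + (s*1) % n = 2 * ((s*1) % n) := by ring
    have h2' : Nat.gcd (2 * ((s*1) % n)) n = Nat.gcd ((2 * ((s*1) % n)) % n) n := by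
      conv_lhs => rw [Nat.gcd_comm, Nat.gcd_rec]
    have h3' : (2 * ((s*1) % n)) % n = (2 * s) % n := by
      rw [show s*1 = s from Nat.mul_one s]
      conv_lhs => rw [Nat.mul_mod]
      conv_rhs => rw [Nat.mul_mod]
      rw [Nat.mod_mod_of_dvd s dvd_rfl]
    have h4' : Nat.gcd ((2*s) % n) n = Nat.gcd (2*s) n := by
      conv_rhs => rw [Nat.gcd_comm, Nat.gcd_rec]
    have h5' : Nat.gcd (2*s) n = Nat.gcd 2 n := Nat.Coprime.gcd_mul_right_cancel 2 hs
    rw [h1', h2', h3', h4', h5']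
  have htqne : t ^ q ≠ t := by
    intro htq
    have hu1' : u = -(v * t) := by rw [hu1, hFpow t htq _]
    have hrelW : B 0 + (⟨t, htq⟩ : F) • B 1 = 0 := by
      apply Subtype.ext
      rw [Submodule.coe_add, SetLike.val_smul, hsmul]
      show u + t * v = 0
      rw [hu1']
      ring
    have hli := Fintype.linearIndependent_iff.mp B.linearIndependent
    have hcontra := hli ![1, (⟨t, htq⟩ : F)] (by rw [Fin.sum_univ_two]; simpa using hrelW) 0
    simp at hcontra
  -- n is even
  have hEven : Even n := by
    by_contra hodd
    have hg1 : Nat.gcd 2 n = 1 := by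
      rcases (Nat.dvd_prime Nat.prime_two).mp (Nat.gcd_dvd_left 2 n) with h' | h'
      · exact h'
      · exact absurd (even_iff_two_dvd.mpr (h' ▸ Nat.gcd_dvd_right 2 n)) hodd
    have hgg := hgcdD
    rw [hgcd2, hg1, pow_one] at hgg
    exact htqne hgg
  have hg2 : Nat.gcd 2 n = 2 := Nat.gcd_eq_left (even_iff_two_dvd.mp hEven)
  have ht2 : t ^ q ^ 2 = t := by
    have hgg := hgcdD
    rwa [hgcd2, hg2] at hgg
  have hteven : ∀ k : ℕ, t ^ q ^ (2*k) = t := by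
    intro k
    induction k with
    | zero => simp
    | succ k ih =>
      have h' : 2*(k+1) = 2*k + 2 := by ring
      rw [h', pow_add, pow_mul, ih]
      exact ht2
  have htodd : ∀ k : ℕ, t ^ q ^ (2*k+1) = t ^ q := by
    intro k
    rw [pow_add, pow_mul, hteven k, pow_one]
  have hj1odd : ((s*1) % n) % 2 = 1 := by
    have hmd := Nat.mod_add_div s n
    obtain ⟨k2, hk2⟩ := hEven
    have hs2 : s % 2 = 1 := by
      rcases Nat.even_or_odd s with hes | hos
      · exfalso
        obtain ⟨k1, hk1⟩ := hes
        have hdd : (2:ℕ) ∣ Nat.gcd s n := Nat.dvd_gcd ⟨k1, by omega⟩ ⟨k2, by omega⟩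
        rw [hs] at hdd
        omega
      · obtain ⟨k1, hk1⟩ := hos
        omega
    obtain ⟨k3, hk3⟩ : ∃ k3, n * (s / n) = 2 * k3 := ⟨k2 * (s / n), by rw [hk2]; ring⟩
    rw [show s*1 = s from Nat.mul_one s]
    rw [hk3] at hmd
    omega
  obtain ⟨k0, hk0⟩ : ∃ k0, (s*1) % n = 2*k0 + 1 := ⟨((s*1) % n) / 2, by omega⟩
  have htj1 : t ^ q ^ ((s*1) % n) = t ^ q := by rw [hk0]; exact htodd k0
  -- conclusion
  refine ⟨hEven, v * (t - t ^ q), b,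
    mul_ne_zero hv0 (sub_ne_zero.mpr fun h' => htqne h'.symm), hbne, ?_⟩
  intro x
  rw [hrep x]
  have hu' : u = -(v * t ^ q) := by rw [hu1, htj1]
  set g : ℕ → L := fun i => (b*x) ^ q ^ i * -(v * t ^ q) + t ^ q ^ i * (b*x) ^ q ^ i * v
    with hgdef
  have step1 : TrL (b*x) * u + TrL (c*x) * v = ∑ i ∈ Finset.range n, g i := by
    rw [hTrapp, hTrapp, hu', Finset.sum_mul, Finset.sum_mul, ← Finset.sum_add_distrib]
    refine Finset.sum_congr rfl fun i _ => ?_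
    have hcx : (c * x) ^ q ^ i = t ^ q ^ i * (b*x) ^ q ^ i := by
      rw [htb, mul_assoc, mul_pow]
    simp only [hgdef]
    rw [hcx]
  have step2 : ∑ i ∈ Finset.range n, g i
      = ∑ k ∈ Finset.range (n/2), g (2*k) + ∑ k ∈ Finset.range (n/2), g (2*k+1) := by
    obtain ⟨k2, hk2⟩ := hEven
    have hn2 : n = 2 * (n/2) := by omega
    conv_lhs => rw [hn2]
    exact sum_range_even_odd g (n/2)
  have step3 : ∑ k ∈ Finset.range (n/2), g (2*k+1) = 0 := by
    apply Finset.sum_eq_zero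
    intro k _
    simp only [hgdef]
    rw [htodd k]
    ring
  have step4 : ∑ k ∈ Finset.range (n/2), g (2*k)
      = ∑ k ∈ Finset.range (n/2), (v * (t - t ^ q)) * (b*x) ^ q ^ (2*k) := by
    refine Finset.sum_congr rfl fun k _ => ?_
    simp only [hgdef]
    rw [hteven k]
    ring
  rw [step1, step2, step3, step4, add_zero, ← Finset.mul_sum]
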